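/- Fix an integer h ≥ 2 and let s_k = (h+1)^(2k)·h and t_k = (h+1)^(2k+1) for k ∈ ℕ. Let B = {ℓ ∈ ℕ : s_k ≤ ℓ ≤ t_k for some odd k ∈ ℕ}. Then limsup_{n→∞} |B ∩ [0,n)| / n = (h+1)³/((h+1)⁴ − 1) and liminf_{n→∞} |B ∩ [0,n)| / n = 1/(h·((h+1)⁴ − 1)). -/

import Mathlib

/-- `s_k = (h+1)^(2k) · h`. -/
def sk (h k : ℕ) : ℕ := (h + 1) ^ (2 * k) * h

/-- `t_k = (h+1)^(2k+1)`. -/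
def tk (h k : ℕ) : ℕ := (h + 1) ^ (2 * k + 1)

namespace DensityOdd

def Pb (h ℓ : ℕ) : Prop := ∃ k, Odd k ∧ sk h k ≤ ℓ ∧ ℓ ≤ tk h k

open Classical in
noncomputable def fB (h n : ℕ) : ℕ := ((Finset.range n).filter (Pb h)).card

open Classical in
lemma card_eq (h n : ℕ) :
    Nat.card {ℓ : ℕ // ℓ < n ∧ ∃ k, Odd k ∧ sk h k ≤ ℓ ∧ ℓ ≤ tk h k} = fB h n := by
  rw [fB, ← Nat.card_eq_finsetCard]
  exact Nat.card_congr (Equiv.subtypeEquivRight fun ℓ => by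
    simp [Pb, Finset.mem_filter, Finset.mem_range, and_comm])

lemma sk_mono (h : ℕ) {k j : ℕ} (hkj : k ≤ j) : sk h k ≤ sk h j :=
  Nat.mul_le_mul_right _ (Nat.pow_le_pow_right (by omega) (by omega))

lemma tk_mono (h : ℕ) {k j : ℕ} (hkj : k ≤ j) : tk h k ≤ tk h j :=
  Nat.pow_le_pow_right (by omega) (by omega)

lemma sk_le_tk (h k : ℕ) : sk h k ≤ tk h k := by
  rw [sk, tk, pow_succ]
  exact Nat.mul_le_mul_left _ (by omega)

lemma tk_lt_sk_succ {h : ℕ} (hh : 2 ≤ h) (k : ℕ) : tk h k < sk h (k+1) := by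
  have : sk h (k+1) = (h+1)^(2*k+1) * ((h+1) * h) := by
    rw [sk]; ring_nf
  rw [this, tk]
  have h1 : 0 < (h+1)^(2*k+1) := Nat.pow_pos (by omega)
  calc (h+1)^(2*k+1) = (h+1)^(2*k+1) * 1 := by ring
    _ < (h+1)^(2*k+1) * ((h+1)*h) := by
        apply Nat.mul_lt_mul_of_le_of_lt (le_refl _) (by nlinarith) h1
lemma not_Pb_of_lt_s1 {h ℓ : ℕ} (hl : ℓ < sk h 1) : ¬ Pb h ℓ := by
  rintro ⟨j, hj, hs, -⟩
  have h1 : 1 ≤ j := hj.pos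
  exact absurd (le_trans (sk_mono h h1) hs) (by omega)

lemma not_Pb_of_gap {h K ℓ : ℕ} (hK : Odd K) (h1 : tk h K < ℓ) (h2 : ℓ < sk h (K+2)) :
    ¬ Pb h ℓ := by
  rintro ⟨j, hj, hs, ht⟩
  rcases le_or_gt j K with hle | hlt
  · exact absurd (le_trans ht (tk_mono h hle)) (by omega)
  · have : K + 2 ≤ j := by
      rcases hj with ⟨a, ha⟩; rcases hK with ⟨b, hb⟩; omega
    exact absurd (le_trans (sk_mono h this) hs) (by omega)

open Classical in
lemma fB_mono (h : ℕ) : Monotone (fB h) := fun n m hnm =>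
  Finset.card_le_card (Finset.filter_subset_filter _ (Finset.range_subset_range.2 hnm))

open Classical in
lemma fB_le_add (h : ℕ) {n m : ℕ} (hnm : n ≤ m) : fB h m ≤ fB h n + (m - n) := by
  have hsplit : Finset.range m = Finset.range n ∪ Finset.Ico n m := by
    simp only [Finset.range_eq_Ico]
    exact (Finset.Ico_union_Ico_eq_Ico (Nat.zero_le n) hnm).symm
  rw [fB, fB, hsplit, Finset.filter_union]
  calc (Finset.filter (Pb h) (Finset.range n) ∪ Finset.filter (Pb h) (Finset.Ico n m)).card
      ≤ (Finset.filter (Pb h) (Finset.range n)).card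
        + (Finset.filter (Pb h) (Finset.Ico n m)).card := Finset.card_union_le _ _
    _ ≤ (Finset.filter (Pb h) (Finset.range n)).card + (m - n) := by
        have := Finset.card_filter_le (Finset.Ico n m) (Pb h)
        rw [Nat.card_Ico] at this
        omega

open Classical in
lemma fB_add_le (h : ℕ) {n m : ℕ} (hnm : n ≤ m) (hP : ∀ ℓ, n ≤ ℓ → ℓ < m → Pb h ℓ) :
    fB h n + (m - n) ≤ fB h m := by
  have hsub : Finset.filter (Pb h) (Finset.range n) ∪ Finset.Ico n m
      ⊆ Finset.filter (Pb h) (Finset.range m) := by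
    intro ℓ hl
    rw [Finset.mem_union] at hl
    rw [Finset.mem_filter, Finset.mem_range]
    rcases hl with hl | hl
    · rw [Finset.mem_filter, Finset.mem_range] at hl
      exact ⟨lt_of_lt_of_le hl.1 hnm, hl.2⟩
    · rw [Finset.mem_Ico] at hl
      exact ⟨hl.2, hP ℓ hl.1 hl.2⟩
  have hdisj : Disjoint (Finset.filter (Pb h) (Finset.range n)) (Finset.Ico n m) := by
    rw [Finset.disjoint_left]
    intro ℓ hl hl'
    rw [Finset.mem_filter, Finset.mem_range] at hl
    rw [Finset.mem_Ico] at hl'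
    omega
  have := Finset.card_le_card hsub
  rw [Finset.card_union_of_disjoint hdisj, Nat.card_Ico] at this
  exact this

open Classical in
lemma fB_gap_le (h : ℕ) {n m : ℕ} (hnm : n ≤ m) (hP : ∀ ℓ, n ≤ ℓ → ℓ < m → ¬ Pb h ℓ) :
    fB h m ≤ fB h n := by
  apply Finset.card_le_card
  intro ℓ hl
  rw [Finset.mem_filter, Finset.mem_range] at hl ⊢
  refine ⟨?_, hl.2⟩
  by_contra hc
  exact hP ℓ (by omega) hl.1 hl.2

lemma fB_s1 (h : ℕ) : fB h (sk h 1) = 0 := by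
  have := fB_gap_le h (Nat.zero_le (sk h 1)) (fun ℓ _ hl => not_Pb_of_lt_s1 hl)
  have h0 : fB h 0 = 0 := by simp [fB]
  omega

open Classical in
lemma fB_le_self (h n : ℕ) : fB h n ≤ n := by
  have := Finset.card_filter_le (Finset.range n) (Pb h)
  rwa [Finset.card_range] at this
/-- geometric partial count: `G h m = (h+1)^2 · Σ_{i≤m} (h+1)^{4i}`. -/
def G (h m : ℕ) : ℕ := (h+1)^2 * ∑ i ∈ Finset.range (m+1), ((h+1)^4)^i

lemma G_succ (h m : ℕ) : G h (m+1) = G h m + (h+1)^(4*m+6) := by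
  rw [G, G, Finset.sum_range_succ, Nat.mul_add, ← pow_mul]
  congr 1
  rw [← pow_add]
  congr 1
  ring

lemma interval_len {h : ℕ} (m : ℕ) :
    tk h (2*m+3) + 1 = sk h (2*m+3) + ((h+1)^(4*m+6) + 1) := by
  have e1 : tk h (2*m+3) = (h+1)^(4*m+6) * (h+1) := by rw [tk, ← pow_succ]; congr 1; ring
  have e2 : sk h (2*m+3) = (h+1)^(4*m+6) * h := by rw [sk]; congr 2; ring
  rw [e1, e2]; ring

lemma t_succ_le_s (h : ℕ) (hh : 2 ≤ h) (m : ℕ) : tk h (2*m+1) + 1 ≤ sk h (2*m+3) := by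
  have h1 := tk_lt_sk_succ hh (2*m+1)
  have h2 := sk_mono h (show 2*m+1+1 ≤ 2*m+3 by omega)
  omega

lemma not_Pb_of_gap' {h m ℓ : ℕ} (h1 : tk h (2*m+1) < ℓ) (h2 : ℓ < sk h (2*m+3)) :
    ¬ Pb h ℓ := by
  refine not_Pb_of_gap (K := 2*m+1) ⟨m, by ring⟩ h1 ?_
  have e : 2*m+1+2 = 2*m+3 := by ring
  rw [e]; exact h2

lemma lower_t {h : ℕ} (hh : 2 ≤ h) : ∀ m, G h m ≤ fB h (tk h (2*m+1) + 1) := by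
  intro m
  induction m with
  | zero =>
      simp only [Nat.mul_zero, Nat.zero_add]
      have hst : sk h 1 ≤ tk h 1 + 1 := le_trans (sk_le_tk h 1) (by omega)
      have h1 := fB_add_le h hst (fun ℓ hs ht => ⟨1, odd_one, hs, by omega⟩)
      have h2 : fB h (sk h 1) = 0 := fB_s1 h
      have e1 : tk h 1 = (h+1)^2 * h + (h+1)^2 := by rw [tk]; ring
      have e2 : sk h 1 = (h+1)^2 * h := by rw [sk]
      have e3 : G h 0 = (h+1)^2 := by simp [G]
      omega
  | succ m ih =>
      have hst : sk h (2*m+3) ≤ tk h (2*m+3) + 1 := le_trans (sk_le_tk h _) (by omega)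
      have h1 := fB_add_le h hst (fun ℓ hs ht => ⟨2*m+3, ⟨m+1, by ring⟩, hs, by omega⟩)
      have h2 : fB h (tk h (2*m+1) + 1) ≤ fB h (sk h (2*m+3)) :=
        fB_mono h (t_succ_le_s h hh m)
      have h3 := interval_len (h := h) m
      have h4 := G_succ h m
      have e : 2*(m+1)+1 = 2*m+3 := by ring
      rw [e]
      omega

lemma upper_t {h : ℕ} (hh : 2 ≤ h) : ∀ m, fB h (tk h (2*m+1) + 1) ≤ G h m + (m+1) := by
  intro m
  induction m with
  | zero =>
      simp only [Nat.mul_zero, Nat.zero_add]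
      have hst : sk h 1 ≤ tk h 1 + 1 := le_trans (sk_le_tk h 1) (by omega)
      have h1 := fB_le_add h hst
      have h2 : fB h (sk h 1) = 0 := fB_s1 h
      have e1 : tk h 1 = (h+1)^2 * h + (h+1)^2 := by rw [tk]; ring
      have e2 : sk h 1 = (h+1)^2 * h := by rw [sk]
      have e3 : G h 0 = (h+1)^2 := by simp [G]
      omega
  | succ m ih =>
      have hst : sk h (2*m+3) ≤ tk h (2*m+3) + 1 := le_trans (sk_le_tk h _) (by omega)
      have h1 := fB_le_add h hst
      have h2 : fB h (sk h (2*m+3)) ≤ fB h (tk h (2*m+1) + 1) :=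
        fB_gap_le h (t_succ_le_s h hh m)
          (fun ℓ hl hl' => not_Pb_of_gap' (by omega) hl')
      have h3 := interval_len (h := h) m
      have h4 := G_succ h m
      have e : 2*(m+1)+1 = 2*m+3 := by ring
      rw [e]
      omega

lemma upper_s {h : ℕ} (hh : 2 ≤ h) (m : ℕ) : fB h (sk h (2*m+3)) ≤ G h m + (m+1) := by
  refine le_trans ?_ (upper_t hh m)
  exact fB_gap_le h (t_succ_le_s h hh m)
    (fun ℓ hl hl' => not_Pb_of_gap' (by omega) hl')
section Real

variable {h : ℕ}

lemma q3 (hh : 2 ≤ h) : (3:ℝ) ≤ (h:ℝ)+1 := by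
  have : (2:ℝ) ≤ (h:ℝ) := by exact_mod_cast hh
  linarith

lemma qpos (hh : 2 ≤ h) : (0:ℝ) < (h:ℝ)+1 := by linarith [q3 hh]

lemma pow_fact (hh : 2 ≤ h) (n : ℕ) : (0:ℝ) < ((h:ℝ)+1)^n := pow_pos (qpos hh) n

lemma D_pos (hh : 2 ≤ h) : (0:ℝ) < ((h:ℝ)+1)^4 - 1 := by
  have h4 : (3:ℝ)^4 ≤ ((h:ℝ)+1)^4 := pow_le_pow_left₀ (by norm_num) (q3 hh) 4
  norm_num at h4; linarith

lemma tk1_cast (h m : ℕ) :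
    ((tk h (2*m+1) : ℕ) : ℝ) = ((h:ℝ)+1)^(4*m) * ((h:ℝ)+1)^3 := by
  rw [tk]; push_cast; rw [← pow_add]; congr 1; ring

lemma tk3_cast (h m : ℕ) :
    ((tk h (2*m+3) : ℕ) : ℝ) = ((h:ℝ)+1)^(4*m) * ((h:ℝ)+1)^7 := by
  rw [tk]; push_cast; rw [← pow_add]; congr 1; ring

lemma sk1_cast (h m : ℕ) :
    ((sk h (2*m+1) : ℕ) : ℝ) = ((h:ℝ)+1)^(4*m) * ((h:ℝ)+1)^2 * (h:ℝ) := by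
  rw [sk]; push_cast; rw [← pow_add]; congr 1; ring

lemma sk3_cast (h m : ℕ) :
    ((sk h (2*m+3) : ℕ) : ℝ) = ((h:ℝ)+1)^(4*m) * ((h:ℝ)+1)^6 * (h:ℝ) := by
  rw [sk]; push_cast; rw [← pow_add]; congr 1; ring

lemma G_cast (hh : 2 ≤ h) (m : ℕ) :
    ((G h m : ℕ) : ℝ) =
      (((h:ℝ)+1)^(4*m) * ((h:ℝ)+1)^6 - ((h:ℝ)+1)^2) / (((h:ℝ)+1)^4 - 1) := by
  have hD := D_pos hh
  have hq1 : ((h:ℝ)+1)^4 ≠ 1 := by intro hc; rw [hc] at hD; norm_num at hD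
  have hDne : ((h:ℝ)+1)^4 - 1 ≠ 0 := ne_of_gt hD
  rw [G]; push_cast
  rw [geom_sum_eq hq1]
  rw [mul_div_assoc']
  rw [div_eq_div_iff hDne hDne]
  have e : ((h:ℝ)+1)^(4*m) * ((h:ℝ)+1)^6 = (((h:ℝ)+1)^4)^(m+1) * ((h:ℝ)+1)^2 := by
    rw [← pow_mul, ← pow_add, ← pow_add]
    congr 1
  rw [e]; ring

lemma one_le_x (hh : 2 ≤ h) (m : ℕ) : (1:ℝ) ≤ ((h:ℝ)+1)^(4*m) :=
  one_le_pow₀ (by linarith [q3 hh])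

end Real
section Real2

variable {h : ℕ}

lemma two_D (hh : 2 ≤ h) :
    ((h:ℝ)+1)^3 + ((h:ℝ)+1)^2 ≤ 2*(((h:ℝ)+1)^4 - 1) := by
  have hq := q3 hh
  nlinarith [mul_nonneg (by linarith : (0:ℝ) ≤ (h:ℝ)+1-3) (by positivity : (0:ℝ) ≤ ((h:ℝ)+1)^3),
    mul_nonneg (by linarith : (0:ℝ) ≤ (h:ℝ)+1-3) (by positivity : (0:ℝ) ≤ ((h:ℝ)+1)^2)]

/-- limsup: frequent lower bound at `t_{2m+1}+1`. -/
lemma R3 (hh : 2 ≤ h) (m : ℕ) :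
    (((h:ℝ)+1)^3 / (((h:ℝ)+1)^4 - 1)) * ((tk h (2*m+1) : ℝ) + 1) - 2
      ≤ (fB h (tk h (2*m+1) + 1) : ℝ) := by
  have hD := D_pos hh
  have hDne : ((h:ℝ)+1)^4 - 1 ≠ 0 := ne_of_gt hD
  have hnat : ((G h m : ℕ) : ℝ) ≤ (fB h (tk h (2*m+1) + 1) : ℝ) := by
    exact_mod_cast lower_t hh m
  rw [G_cast hh m] at hnat
  have e : (((h:ℝ)+1)^3 / (((h:ℝ)+1)^4 - 1)) * (((h:ℝ)+1)^(4*m) * ((h:ℝ)+1)^3 + 1)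
      - (((h:ℝ)+1)^(4*m) * ((h:ℝ)+1)^6 - ((h:ℝ)+1)^2) / (((h:ℝ)+1)^4 - 1)
      = (((h:ℝ)+1)^3 + ((h:ℝ)+1)^2) / (((h:ℝ)+1)^4 - 1) := by
    field_simp
    ring
  have hle : (((h:ℝ)+1)^3 + ((h:ℝ)+1)^2) / (((h:ℝ)+1)^4 - 1) ≤ 2 := by
    rw [div_le_iff₀ hD]
    linarith [two_D hh]
  rw [tk1_cast h m]
  linarith

/-- liminf: frequent upper bound at `s_{2m+3}`. -/
lemma R2 (hh : 2 ≤ h) (m : ℕ) :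
    (fB h (sk h (2*m+3)) : ℝ)
      ≤ (1 / ((h:ℝ) * (((h:ℝ)+1)^4 - 1))) * (sk h (2*m+3) : ℝ) + (m+1) := by
  have hD := D_pos hh
  have hDne : ((h:ℝ)+1)^4 - 1 ≠ 0 := ne_of_gt hD
  have hhne : (h:ℝ) ≠ 0 := by positivity
  have hnat : (fB h (sk h (2*m+3)) : ℝ) ≤ ((G h m : ℕ) : ℝ) + (m+1) := by
    exact_mod_cast upper_s hh m
  rw [G_cast hh m] at hnat
  have e : (1 / ((h:ℝ) * (((h:ℝ)+1)^4 - 1))) * (((h:ℝ)+1)^(4*m) * ((h:ℝ)+1)^6 * (h:ℝ))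
      - (((h:ℝ)+1)^(4*m) * ((h:ℝ)+1)^6 - ((h:ℝ)+1)^2) / (((h:ℝ)+1)^4 - 1)
      = ((h:ℝ)+1)^2 / (((h:ℝ)+1)^4 - 1) := by
    field_simp
    ring
  have hpos : (0:ℝ) ≤ ((h:ℝ)+1)^2 / (((h:ℝ)+1)^4 - 1) := by positivity
  rw [sk3_cast h m]
  linarith

end Real2
section Core

-- upper bounds with L = q^3/(q^4-1)
lemma q4_big {q : ℝ} (hq : 3 ≤ q) : 81 ≤ q^4 := by
  have := pow_le_pow_left₀ (by norm_num : (0:ℝ) ≤ 3) hq 4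
  norm_num at this; linarith

lemma core_L_le_one {q L : ℝ} (hq : 3 ≤ q) (hD : 0 < q^4-1) (hL : L*(q^4-1) = q^3) :
    0 ≤ L ∧ L ≤ 1 := by
  constructor
  · nlinarith [pow_pos (by linarith : (0:ℝ) < q) 3]
  · by_contra hc
    push_neg at hc
    have h1 : q^4 - 1 < L*(q^4-1) := by nlinarith
    rw [hL] at h1
    nlinarith [mul_nonneg (by linarith : (0:ℝ) ≤ q-3) (by positivity : (0:ℝ) ≤ q^3),
      mul_nonneg (by linarith : (0:ℝ) ≤ q-3) (by positivity : (0:ℝ) ≤ q^2),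
      mul_nonneg (by linarith : (0:ℝ) ≤ q-3) (by linarith : (0:ℝ) ≤ q)]

lemma core_u_base {q L n : ℝ} (hq : 3 ≤ q) (hD : 0 < q^4-1) (hL : L*(q^4-1) = q^3)
    (hL1 : L ≤ 1) (hn : n ≤ q^3+1) : n - q^2*(q-1) ≤ L*n + 2 := by
  nlinarith [mul_nonneg (by linarith : (0:ℝ) ≤ 1 - L) (by linarith : (0:ℝ) ≤ q^3+1-n),
    mul_nonneg (by linarith : (0:ℝ) ≤ q - 3) (by positivity : (0:ℝ) ≤ q^2)]

lemma core_u_step {q L x n : ℝ} (hq : 3 ≤ q) (hx : 1 ≤ x) (hD : 0 < q^4-1)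
    (hL : L*(q^4-1) = q^3) (hL1 : L ≤ 1) (hn : n ≤ x*q^7+1) :
    L*(x*q^3+1) + (n - x*q^6*(q-1)) ≤ L*n + 2 := by
  have hkey : L*x*q^7 - L*x*q^3 = x*q^6 := by linear_combination (x*q^3)*hL
  nlinarith [mul_nonneg (by linarith : (0:ℝ) ≤ 1 - L) (by linarith : (0:ℝ) ≤ x*q^7+1-n)]

-- lower bounds with L' = 1/((q-1)(q^4-1))
lemma core_Lp {q L' : ℝ} (hq : 3 ≤ q) (hD : 0 < q^4-1) (hL' : L'*((q-1)*(q^4-1)) = 1) :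
    0 ≤ L' ∧ L' ≤ 1 ∧ L'*(q^2*(q-1)) ≤ 1 := by
  have hq4 := q4_big hq
  have hden : (0:ℝ) < (q-1)*(q^4-1) := by nlinarith
  have hL'0 : 0 ≤ L' := by nlinarith
  refine ⟨hL'0, ?_, ?_⟩
  · nlinarith [mul_nonneg hL'0 (by nlinarith : (0:ℝ) ≤ (q-1)*(q^4-1) - 1)]
  · -- L'*q^2*(q-1) ≤ 1 ⟺ q^2 ≤ q^4-1
    nlinarith [mul_nonneg hL'0 (by nlinarith [sq_nonneg q, sq_nonneg (q-1), sq_nonneg (q+1), sq_nonneg (q*q-q)] : (0:ℝ) ≤ (q-1)*((q^4-1) - q^2))]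

end Core
section Global

variable {h : ℕ}

lemma core_l_int {L' s n b : ℝ} (h1 : L' ≤ 1) (hbs : L'*s - 1 ≤ b) (hsn : s ≤ n) :
    L'*n - 1 ≤ b + (n - s) := by
  nlinarith [mul_nonneg (by linarith : (0:ℝ) ≤ 1 - L') (by linarith : (0:ℝ) ≤ n - s)]

lemma s1_cast (h : ℕ) : ((sk h 1 : ℕ) : ℝ) = ((h:ℝ)+1)^2*((h:ℝ)+1-1) := by
  rw [sk]; push_cast; norm_num

lemma t1_cast (h : ℕ) : ((tk h 1 : ℕ) : ℝ) = ((h:ℝ)+1)^3 := by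
  rw [tk]; push_cast; norm_num

lemma q2_div_D_le_one (hh : 2 ≤ h) :
    ((h:ℝ)+1)^2 / (((h:ℝ)+1)^4 - 1) ≤ 1 := by
  have hq := q3 hh
  rw [div_le_one (D_pos hh)]
  nlinarith [mul_nonneg (by linarith : (0:ℝ) ≤ (h:ℝ)+1-3) (by positivity : (0:ℝ) ≤ ((h:ℝ)+1)^3),
    mul_nonneg (by linarith : (0:ℝ) ≤ (h:ℝ)+1-3) (by positivity : (0:ℝ) ≤ ((h:ℝ)+1)^2),
    mul_nonneg (by linarith : (0:ℝ) ≤ (h:ℝ)+1-3) (by linarith : (0:ℝ) ≤ (h:ℝ)+1)]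

lemma eL' (hh : 2 ≤ h) (m : ℕ) :
    (1 / ((h:ℝ) * (((h:ℝ)+1)^4 - 1))) * (((h:ℝ)+1)^(4*m) * ((h:ℝ)+1)^6 * ((h:ℝ)+1-1))
      - (((h:ℝ)+1)^(4*m) * ((h:ℝ)+1)^6 - ((h:ℝ)+1)^2) / (((h:ℝ)+1)^4 - 1)
      = ((h:ℝ)+1)^2 / (((h:ℝ)+1)^4 - 1) := by
  have hDne : ((h:ℝ)+1)^4 - 1 ≠ 0 := ne_of_gt (D_pos hh)
  have hhne : (h:ℝ) ≠ 0 := by positivity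
  have e1 : ((h:ℝ)+1-1) = (h:ℝ) := by ring
  rw [e1]
  field_simp
  ring

lemma lower_all_aux (hh : 2 ≤ h) :
    ∀ m, ∀ n : ℕ, n ≤ tk h (2*m+1) + 1 →
      (1 / ((h:ℝ) * (((h:ℝ)+1)^4 - 1))) * n - 1 ≤ (fB h n : ℝ) := by
  have hq := q3 hh
  have hD := D_pos hh
  have hhne : (h:ℝ) ≠ 0 := by positivity
  have hL' : (1 / ((h:ℝ) * (((h:ℝ)+1)^4 - 1))) * ((((h:ℝ)+1)-1)*(((h:ℝ)+1)^4 - 1)) = 1 := by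
    have e1 : ((h:ℝ)+1-1) = (h:ℝ) := by ring
    rw [e1]; field_simp
  obtain ⟨hL'0, hL'1, hL's1⟩ := core_Lp hq hD hL'
  intro m
  induction m with
  | zero =>
      intro n hn
      have hn' : n ≤ tk h 1 + 1 := hn
      rcases le_or_gt n (sk h 1) with hns | hns
      · have hc : (n:ℝ) ≤ ((h:ℝ)+1)^2*((h:ℝ)+1-1) := by
          rw [← s1_cast h]; exact_mod_cast hns
        have := mul_le_mul_of_nonneg_left hc hL'0
        have hf : (0:ℝ) ≤ (fB h n : ℝ) := Nat.cast_nonneg _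
        linarith
      · have hP : ∀ ℓ, sk h 1 ≤ ℓ → ℓ < n → Pb h ℓ :=
          fun ℓ ha hb => ⟨1, odd_one, ha, by omega⟩
        have hnat' := fB_add_le h (le_of_lt hns) hP
        rw [fB_s1 h] at hnat'
        have hnat : n - sk h 1 ≤ fB h n := by omega
        have hcast : ((n:ℝ) - ((h:ℝ)+1)^2*((h:ℝ)+1-1)) ≤ (fB h n : ℝ) := by
          rw [← s1_cast h]
          have : ((n - sk h 1 : ℕ) : ℝ) ≤ (fB h n : ℝ) := by exact_mod_cast hnat
          rwa [Nat.cast_sub (le_of_lt hns)] at this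
        have hs : (((h:ℝ)+1)^2*((h:ℝ)+1-1)) ≤ (n:ℝ) := by
          rw [← s1_cast h]; exact_mod_cast le_of_lt hns
        have := core_l_int (b := 0) hL'1 (by linarith) hs
        linarith
  | succ m ih =>
      intro n hn
      have hn' : n ≤ tk h (2*m+3) + 1 := by
        rw [show 2*m+3 = 2*(m+1)+1 by ring]; exact hn
      rcases le_or_gt n (tk h (2*m+1)+1) with h1 | h1
      · exact ih n h1
      rcases le_or_gt n (sk h (2*m+3)) with h2 | h2
      · have hmono : fB h (tk h (2*m+1)+1) ≤ fB h n := fB_mono h (by omega)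
        have hG : ((G h m : ℕ) : ℝ) ≤ (fB h n : ℝ) := by
          exact_mod_cast le_trans (lower_t hh m) hmono
        rw [G_cast hh m] at hG
        have hc : (n:ℝ) ≤ ((h:ℝ)+1)^(4*m) * ((h:ℝ)+1)^6 * ((h:ℝ)+1-1) := by
          have := sk3_cast h m
          have h2' : (n:ℝ) ≤ ((sk h (2*m+3) : ℕ) : ℝ) := by exact_mod_cast h2
          rw [this] at h2'
          linarith [h2']
        have hmul := mul_le_mul_of_nonneg_left hc hL'0
        have he := eL' hh m
        have hq2 := q2_div_D_le_one hh
        linarith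
      · have hP : ∀ ℓ, sk h (2*m+3) ≤ ℓ → ℓ < n → Pb h ℓ :=
          fun ℓ ha hb => ⟨2*m+3, ⟨m+1, by ring⟩, ha, by omega⟩
        have hnat := fB_add_le h (le_of_lt h2) hP
        have hGs : G h m ≤ fB h (sk h (2*m+3)) :=
          le_trans (lower_t hh m) (fB_mono h (t_succ_le_s h hh m))
        have hcomb : ((G h m : ℕ) : ℝ) + ((n:ℝ) - ((sk h (2*m+3) : ℕ):ℝ)) ≤ (fB h n : ℝ) := by
          have : ((G h m + (n - sk h (2*m+3)) : ℕ) : ℝ) ≤ (fB h n : ℝ) := by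
            exact_mod_cast le_trans (Nat.add_le_add_right hGs _) hnat
          rwa [Nat.cast_add, Nat.cast_sub (le_of_lt h2)] at this
        rw [G_cast hh m, sk3_cast h m] at hcomb
        have hs : (((h:ℝ)+1)^(4*m) * ((h:ℝ)+1)^6 * ((h:ℝ)+1-1)) ≤ (n:ℝ) := by
          have := sk3_cast h m
          have h2' : ((sk h (2*m+3) : ℕ) : ℝ) ≤ (n:ℝ) := by exact_mod_cast le_of_lt h2
          rw [this] at h2'
          linarith [h2']
        have he := eL' hh m
        have hq2 := q2_div_D_le_one hh
        have := core_l_int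
          (b := (((h:ℝ)+1)^(4*m) * ((h:ℝ)+1)^6 - ((h:ℝ)+1)^2) / (((h:ℝ)+1)^4 - 1))
          hL'1 (by linarith) hs
        have e6 : ((h:ℝ)+1)^(4*m) * ((h:ℝ)+1)^6 * (h:ℝ)
            = ((h:ℝ)+1)^(4*m) * ((h:ℝ)+1)^6 * ((h:ℝ)+1-1) := by ring
        rw [e6] at hcomb
        linarith

lemma R1 (hh : 2 ≤ h) (n : ℕ) :
    (1 / ((h:ℝ) * (((h:ℝ)+1)^4 - 1))) * n - 1 ≤ (fB h n : ℝ) := by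
  apply lower_all_aux hh n n
  have h1 : n < (h+1)^n := Nat.lt_pow_self (by omega)
  have h2 : (h+1)^n ≤ (h+1)^(2*(2*n+1)+1) := Nat.pow_le_pow_right (by omega) (by omega)
  rw [tk]
  omega

end Global
section GlobalU

variable {h : ℕ}

lemma upper_all_aux (hh : 2 ≤ h) :
    ∀ m, ∀ n : ℕ, n ≤ tk h (2*m+1) + 1 →
      (fB h n : ℝ) ≤ (((h:ℝ)+1)^3 / (((h:ℝ)+1)^4 - 1)) * n + (2*(m:ℝ)+2) := by
  have hq := q3 hh
  have hD := D_pos hh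
  have hDne : ((h:ℝ)+1)^4 - 1 ≠ 0 := ne_of_gt hD
  have hL : (((h:ℝ)+1)^3 / (((h:ℝ)+1)^4 - 1)) * (((h:ℝ)+1)^4 - 1) = ((h:ℝ)+1)^3 := by
    field_simp
  obtain ⟨hL0, hL1⟩ := core_L_le_one hq hD hL
  intro m
  induction m with
  | zero =>
      intro n hn
      have hn' : n ≤ tk h 1 + 1 := hn
      rcases le_or_gt n (sk h 1) with hns | hns
      · have h0 : fB h n = 0 := by
          have := fB_mono h hns
          rw [fB_s1 h] at this
          omega
        rw [h0]
        have : (0:ℝ) ≤ (((h:ℝ)+1)^3 / (((h:ℝ)+1)^4 - 1)) * n :=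
          mul_nonneg hL0 (Nat.cast_nonneg _)
        push_cast
        linarith
      · have hnat' := fB_le_add h (le_of_lt hns)
        rw [fB_s1 h] at hnat'
        have hnat : fB h n ≤ n - sk h 1 := by omega
        have hcast : (fB h n : ℝ) ≤ (n:ℝ) - ((h:ℝ)+1)^2*((h:ℝ)+1-1) := by
          rw [← s1_cast h]
          have : (fB h n : ℝ) ≤ ((n - sk h 1 : ℕ) : ℝ) := by exact_mod_cast hnat
          rwa [Nat.cast_sub (le_of_lt hns)] at this
        have hnr : (n:ℝ) ≤ ((h:ℝ)+1)^3 + 1 := by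
          have : (n:ℝ) ≤ ((tk h 1 : ℕ) : ℝ) + 1 := by exact_mod_cast hn'
          rwa [t1_cast h] at this
        have := core_u_base hq hD hL hL1 hnr
        push_cast
        linarith
  | succ m ih =>
      intro n hn
      have hn' : n ≤ tk h (2*m+3) + 1 := by
        rw [show 2*m+3 = 2*(m+1)+1 by ring]; exact hn
      rcases le_or_gt n (tk h (2*m+1)+1) with h1 | h1
      · have := ih n h1
        push_cast
        push_cast at this
        linarith
      have hgap : fB h (sk h (2*m+3)) ≤ fB h (tk h (2*m+1)+1) :=
        fB_gap_le h (t_succ_le_s h hh m) (fun ℓ hl hl' => not_Pb_of_gap' (by omega) hl')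
      have hih := ih (tk h (2*m+1)+1) (le_refl _)
      have htc : ((tk h (2*m+1) : ℕ) : ℝ) = ((h:ℝ)+1)^(4*m) * ((h:ℝ)+1)^3 := tk1_cast h m
      rcases le_or_gt n (sk h (2*m+3)) with h2 | h2
      · have hmono : fB h n ≤ fB h (sk h (2*m+3)) := fB_mono h h2
        have hchain : (fB h n : ℝ) ≤ (fB h (tk h (2*m+1)+1) : ℝ) := by
          exact_mod_cast le_trans hmono hgap
        have hmul : (((h:ℝ)+1)^3 / (((h:ℝ)+1)^4 - 1)) * (((tk h (2*m+1) : ℕ) : ℝ) + 1)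
            ≤ (((h:ℝ)+1)^3 / (((h:ℝ)+1)^4 - 1)) * n := by
          apply mul_le_mul_of_nonneg_left _ hL0
          have : ((tk h (2*m+1) : ℕ) : ℝ) + 1 ≤ (n:ℝ) := by exact_mod_cast le_of_lt h1
          linarith
        push_cast
        push_cast at hih
        linarith
      · have hnat := fB_le_add h (le_of_lt h2)
        have hcomb : (fB h n : ℝ) ≤ (fB h (tk h (2*m+1)+1) : ℝ)
            + ((n:ℝ) - ((sk h (2*m+3) : ℕ):ℝ)) := by
          have hx : fB h n ≤ fB h (tk h (2*m+1)+1) + (n - sk h (2*m+3)) := by omega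
          have := (Nat.cast_le (α := ℝ)).2 hx
          push_cast [Nat.cast_sub (le_of_lt h2)] at this
          linarith
        have hnr : (n:ℝ) ≤ ((h:ℝ)+1)^(4*m) * ((h:ℝ)+1)^7 + 1 := by
          have : (n:ℝ) ≤ ((tk h (2*m+3) : ℕ) : ℝ) + 1 := by exact_mod_cast hn'
          rwa [tk3_cast h m] at this
        have hstep := core_u_step hq (one_le_x hh m) hD hL hL1 hnr
        have hsc : ((sk h (2*m+3) : ℕ) : ℝ)
            = ((h:ℝ)+1)^(4*m) * ((h:ℝ)+1)^6 * ((h:ℝ)+1-1) := by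
          rw [sk3_cast h m]; ring
        rw [hsc] at hcomb
        push_cast at hih
        rw [htc] at hih
        push_cast
        linarith

end GlobalU
section Main

variable {h : ℕ}

lemma my_le_of_eps {a b : ℝ} (H : ∀ ε : ℝ, 0 < ε → a ≤ b + ε) : a ≤ b := by
  by_contra hc
  push_neg at hc
  have := H ((a-b)/2) (by linarith)
  linarith

lemma n_le_tk (hh : 2 ≤ h) (n : ℕ) : n ≤ tk h (2*n+1) + 1 := by
  have h1 : n < (h+1)^n := Nat.lt_pow_self (by omega)
  have h2 : (h+1)^n ≤ (h+1)^(2*(2*n+1)+1) := Nat.pow_le_pow_right (by omega) (by omega)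
  rw [tk]; omega

set_option maxHeartbeats 1000000 in
/-- eventual upper bound for limsup. -/
lemma ev_upper (hh : 2 ≤ h) {ε : ℝ} (hε : 0 < ε) :
    ∀ᶠ n in Filter.atTop, (fB h n : ℝ) / n
      ≤ ((h:ℝ)+1)^3 / (((h:ℝ)+1)^4 - 1) + ε := by
  obtain ⟨M, hM⟩ := pow_unbounded_of_one_lt (R := ℝ) (1/ε) (by norm_num : (1:ℝ) < 3)
  have hεM : 1 ≤ ε * 3^M := by
    rw [div_lt_iff₀ hε] at hM
    nlinarith
  filter_upwards [Filter.eventually_ge_atTop (tk h (2*(M+2)+1) + 2)] with n hnN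
  have hex : ∃ j, n ≤ tk h (2*j+1) + 1 := ⟨n, n_le_tk hh n⟩
  set j := Nat.find hex with hjdef
  have hj1 : n ≤ tk h (2*j+1) + 1 := Nat.find_spec hex
  have hjM : M + 2 < j := by
    by_contra hc
    push_neg at hc
    have := tk_mono h (show 2*j+1 ≤ 2*(M+2)+1 by omega)
    omega
  have hmin := Nat.find_min hex (show j - 1 < j by omega)
  push_neg at hmin
  -- n is large: n ≥ 3^(4j-1)
  have hpow : 3^(4*j-1) ≤ n := by
    have e : 2*(2*(j-1)+1)+1 = 4*j-1 := by omega
    have h3 : (3:ℕ)^(4*j-1) ≤ (h+1)^(4*j-1) := Nat.pow_le_pow_left (by omega) _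
    have h4 : tk h (2*(j-1)+1) = (h+1)^(4*j-1) := by rw [tk, e]
    omega
  have hn0 : 0 < n := by
    have : (0:ℕ) < 3^(4*j-1) := Nat.pow_pos (by omega)
    omega
  -- (2j+2 : ℝ) ≤ ε * n
  have hkey : (2*(j:ℝ)+2) ≤ ε * n := by
    have hnat1 : 2*j+2 < 3^(2*j+2) := Nat.lt_pow_self (by omega)
    have hnat2 : (3:ℕ)^(M + (2*j+2)) ≤ 3^(4*j-1) := Nat.pow_le_pow_right (by omega) (by omega)
    have hr1 : ((3:ℝ))^(M+(2*j+2)) ≤ (n:ℝ) := by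
      have : (3:ℕ)^(M+(2*j+2)) ≤ n := le_trans hnat2 hpow
      exact_mod_cast this
    have hr2 : (2*(j:ℝ)+2) ≤ (3:ℝ)^(2*j+2) := by exact_mod_cast le_of_lt hnat1
    have hr3 : ε * (3:ℝ)^(M+(2*j+2)) ≤ ε * n := mul_le_mul_of_nonneg_left hr1 (le_of_lt hε)
    rw [pow_add] at hr3
    have h3pos : (0:ℝ) < (3:ℝ)^(2*j+2) := by positivity
    nlinarith
  have hub := upper_all_aux hh j n hj1
  rw [div_le_iff₀ (by exact_mod_cast hn0 : (0:ℝ) < (n:ℝ))]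
  nlinarith [hub, hkey]

end Main
section Main2

variable {h : ℕ}

/-- frequent lower bound for limsup. -/
lemma freq_lower (hh : 2 ≤ h) {ε : ℝ} (hε : 0 < ε) :
    ∃ᶠ n in Filter.atTop,
      ((h:ℝ)+1)^3 / (((h:ℝ)+1)^4 - 1) - ε ≤ (fB h n : ℝ) / n := by
  rw [Filter.frequently_atTop]
  intro N
  obtain ⟨M1, hM1⟩ := pow_unbounded_of_one_lt (R := ℝ) (2/ε) (by norm_num : (1:ℝ) < 3)
  set m := max N M1 with hm
  refine ⟨tk h (2*m+1) + 1, ?_, ?_⟩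
  · have h1 : m < 3^m := Nat.lt_pow_self (by omega)
    have h2 : (3:ℕ)^m ≤ (h+1)^m := Nat.pow_le_pow_left (by omega) m
    have h3 : (h+1)^m ≤ (h+1)^(2*(2*m+1)+1) := Nat.pow_le_pow_right (by omega) (by omega)
    have h4 : tk h (2*m+1) = (h+1)^(2*(2*m+1)+1) := rfl
    omega
  · have hnn : (3:ℕ)^M1 ≤ tk h (2*m+1) := by
      have h2 : (3:ℕ)^M1 ≤ (h+1)^M1 := Nat.pow_le_pow_left (by omega) M1
      have h3 : (h+1)^M1 ≤ (h+1)^(2*(2*m+1)+1) := Nat.pow_le_pow_right (by omega) (by omega)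
      have h4 : tk h (2*m+1) = (h+1)^(2*(2*m+1)+1) := rfl
      omega
    have hnr : (2:ℝ)/ε < ((tk h (2*m+1) : ℕ) : ℝ) + 1 := by
      have : ((3:ℕ)^M1 : ℝ) ≤ ((tk h (2*m+1) : ℕ) : ℝ) := by exact_mod_cast hnn
      have h3M : (2:ℝ)/ε < (3:ℝ)^M1 := by exact_mod_cast hM1
      push_cast at this
      linarith
    have hlow := R3 hh m
    have hpos : (0:ℝ) < ((tk h (2*m+1) : ℕ) : ℝ) + 1 := by positivity
    have hcast : ((tk h (2*m+1) + 1 : ℕ) : ℝ) = ((tk h (2*m+1) : ℕ) : ℝ) + 1 := by push_cast; ring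
    rw [hcast, le_div_iff₀ hpos]
    have hε2 : 2 ≤ ε * (((tk h (2*m+1) : ℕ) : ℝ) + 1) := by
      rw [div_lt_iff₀ hε] at hnr
      nlinarith
    nlinarith
/-- frequent upper bound for liminf. -/
lemma freq_upper (hh : 2 ≤ h) {ε : ℝ} (hε : 0 < ε) :
    ∃ᶠ n in Filter.atTop,
      (fB h n : ℝ) / n ≤ 1 / ((h:ℝ) * (((h:ℝ)+1)^4 - 1)) + ε := by
  rw [Filter.frequently_atTop]
  intro N
  obtain ⟨M0, hM0⟩ := pow_unbounded_of_one_lt (R := ℝ) (1/ε) (by norm_num : (1:ℝ) < 3)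
  set m := max N M0 with hm
  have hεM : 1 ≤ ε * 3^M0 := by
    rw [div_lt_iff₀ hε] at hM0
    nlinarith
  refine ⟨sk h (2*m+3), ?_, ?_⟩
  · have h1 : m < 3^m := Nat.lt_pow_self (by omega)
    have h2 : (3:ℕ)^m ≤ (h+1)^m := Nat.pow_le_pow_left (by omega) m
    have h3 : (h+1)^m ≤ (h+1)^(2*(2*m+3)) := Nat.pow_le_pow_right (by omega) (by omega)
    have h4 : (h+1)^(2*(2*m+3)) ≤ (h+1)^(2*(2*m+3)) * h := by
      have : 0 < (h+1)^(2*(2*m+3)) := Nat.pow_pos (by omega)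
      nlinarith
    have h5 : sk h (2*m+3) = (h+1)^(2*(2*m+3)) * h := rfl
    omega
  · have hns : (3:ℕ)^(M0 + (m+1)) ≤ sk h (2*m+3) := by
      have h2 : (3:ℕ)^(M0+(m+1)) ≤ (h+1)^(M0+(m+1)) := Nat.pow_le_pow_left (by omega) _
      have h3 : (h+1)^(M0+(m+1)) ≤ (h+1)^(2*(2*m+3)) := Nat.pow_le_pow_right (by omega) (by omega)
      have h4 : (h+1)^(2*(2*m+3)) ≤ (h+1)^(2*(2*m+3)) * h := by
        have : 0 < (h+1)^(2*(2*m+3)) := Nat.pow_pos (by omega)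
        nlinarith
      have h5 : sk h (2*m+3) = (h+1)^(2*(2*m+3)) * h := rfl
      omega
    have hpos : 0 < sk h (2*m+3) := by
      have : (0:ℕ) < 3^(M0+(m+1)) := Nat.pow_pos (by omega)
      omega
    have hposr : (0:ℝ) < ((sk h (2*m+3) : ℕ) : ℝ) := by exact_mod_cast hpos
    -- (m+1 : ℝ) ≤ ε * s
    have hkey : ((m:ℝ)+1) ≤ ε * ((sk h (2*m+3) : ℕ) : ℝ) := by
      have hnat1 : m+1 < 3^(m+1) := Nat.lt_pow_self (by omega)
      have hr1 : ((3:ℝ))^(M0+(m+1)) ≤ ((sk h (2*m+3) : ℕ) : ℝ) := by exact_mod_cast hns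
      have hr2 : ((m:ℝ)+1) ≤ (3:ℝ)^(m+1) := by exact_mod_cast le_of_lt hnat1
      have hr3 : ε * (3:ℝ)^(M0+(m+1)) ≤ ε * ((sk h (2*m+3) : ℕ) : ℝ) :=
        mul_le_mul_of_nonneg_left hr1 (le_of_lt hε)
      rw [pow_add] at hr3
      have h3pos : (0:ℝ) < (3:ℝ)^(m+1) := by positivity
      nlinarith
    have hup := R2 hh m
    rw [div_le_iff₀ hposr]
    nlinarith
/-- eventual lower bound for liminf. -/
lemma ev_lower (hh : 2 ≤ h) {ε : ℝ} (hε : 0 < ε) :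
    ∀ᶠ n in Filter.atTop,
      1 / ((h:ℝ) * (((h:ℝ)+1)^4 - 1)) - ε ≤ (fB h n : ℝ) / n := by
  obtain ⟨N₀, hN₀⟩ := exists_nat_gt (1/ε)
  filter_upwards [Filter.eventually_ge_atTop (max 1 N₀)] with n hn
  have hn1 : 1 ≤ n := le_trans (le_max_left _ _) hn
  have hnN : (N₀ : ℝ) ≤ (n : ℝ) := by exact_mod_cast le_trans (le_max_right _ _) hn
  have hpos : (0:ℝ) < (n:ℝ) := by exact_mod_cast hn1
  have h1 : 1 ≤ ε * n := by
    rw [div_lt_iff₀ hε] at hN₀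
    nlinarith
  have hlow := R1 hh n
  rw [le_div_iff₀ hpos]
  nlinarith

end Main2
lemma ub_one {h : ℕ} (n : ℕ) : (fB h n : ℝ) / n ≤ 1 := by
  rcases Nat.eq_zero_or_pos n with rfl | hn
  · simp [fB]
  · rw [div_le_one (by exact_mod_cast hn : (0:ℝ) < (n:ℝ))]
    exact_mod_cast fB_le_self h n

end DensityOdd

open DensityOdd

/-- Fix `h ≥ 2` and let
`B = {ℓ : s_k ≤ ℓ ≤ t_k for some odd k}`.  Then
`limsup_n |B ∩ [0,n)|/n = (h+1)³/((h+1)⁴ − 1)` and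
`liminf_n |B ∩ [0,n)|/n = 1/(h((h+1)⁴ − 1))`. -/
theorem density_of_odd_intervals (h : ℕ) (hh : 2 ≤ h) :
    Filter.limsup (fun n : ℕ =>
        (Nat.card {ℓ : ℕ // ℓ < n ∧ ∃ k, Odd k ∧ sk h k ≤ ℓ ∧ ℓ ≤ tk h k} : ℝ) / n)
        Filter.atTop = ((h : ℝ) + 1) ^ 3 / (((h : ℝ) + 1) ^ 4 - 1) ∧
    Filter.liminf (fun n : ℕ =>
        (Nat.card {ℓ : ℕ // ℓ < n ∧ ∃ k, Odd k ∧ sk h k ≤ ℓ ∧ ℓ ≤ tk h k} : ℝ) / n)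
        Filter.atTop = 1 / ((h : ℝ) * (((h : ℝ) + 1) ^ 4 - 1)) := by
  have hfe : (fun n : ℕ =>
      (Nat.card {ℓ : ℕ // ℓ < n ∧ ∃ k, Odd k ∧ sk h k ≤ ℓ ∧ ℓ ≤ tk h k} : ℝ) / n)
      = fun n : ℕ => (fB h n : ℝ) / n := funext fun n => by rw [card_eq]
  rw [hfe]
  have hbd : Filter.IsBoundedUnder (· ≤ ·) Filter.atTop (fun n : ℕ => (fB h n : ℝ)/n) :=
    Filter.isBoundedUnder_of ⟨1, fun n => ub_one n⟩
  have hbd' : Filter.IsBoundedUnder (· ≥ ·) Filter.atTop (fun n : ℕ => (fB h n : ℝ)/n) :=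
    Filter.isBoundedUnder_of ⟨0, fun n => by positivity⟩
  have hcob : Filter.IsCoboundedUnder (· ≤ ·) Filter.atTop (fun n : ℕ => (fB h n : ℝ)/n) :=
    hbd'.isCoboundedUnder_le
  have hcob' : Filter.IsCoboundedUnder (· ≥ ·) Filter.atTop (fun n : ℕ => (fB h n : ℝ)/n) :=
    hbd.isCoboundedUnder_ge
  constructor
  · apply le_antisymm
    · apply my_le_of_eps
      intro ε hε
      exact Filter.limsup_le_of_le hcob (ev_upper hh hε)
    · apply my_le_of_eps
      intro ε hε
      have := Filter.le_limsup_of_frequently_le (freq_lower hh hε) hbd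
      linarith
  · apply le_antisymm
    · apply my_le_of_eps
      intro ε hε
      exact Filter.liminf_le_of_frequently_le (freq_upper hh hε) hbd'
    · apply my_le_of_eps
      intro ε hε
      have := Filter.le_liminf_of_le hcob' (ev_lower hh hε)
      linarith
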